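/- HyperLTL-SAT is RE-hard: the halting problem (the set of codes e such that the e-th partial computable function halts on input e) many-one reduces to the set of (Gödel codes of) satisfiable HyperLTL formulas. -/

import Mathlib

/-- A trace over atomic propositions (modeled as naturals). -/
abbrev Trace : Type := ℕ → Set ℕ

/-- HyperLTL formulas: atomic propositions `a` and trace variables `π` are naturals. -/
inductive HLTL : Type
  | tt    : HLTL
  | atom  : ℕ → ℕ → HLTL            -- `atom a π` is `a_π`
  | neg   : HLTL → HLTL
  | or    : HLTL → HLTL → HLTL
  | next  : HLTL → HLTL
  | until_ : HLTL → HLTL → HLTL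
  | ex    : ℕ → HLTL → HLTL          -- `∃ π. ψ`
  | all   : ℕ → HLTL → HLTL          -- `∀ π. ψ`

namespace HLTL

/-- Shift every trace in the range of an assignment by `i` steps. -/
def shift (A : ℕ → Trace) (i : ℕ) : ℕ → Trace := fun π n => A π (n + i)

/-- Semantics of HyperLTL: `sat T ψ A` is `A ⊨_T ψ`. -/
def sat (T : Set Trace) : HLTL → (ℕ → Trace) → Prop
  | .tt, _ => True
  | .atom a π, A => a ∈ A π 0
  | .neg φ, A => ¬ sat T φ A
  | .or φ ψ, A => sat T φ A ∨ sat T ψ A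
  | .next φ, A => sat T φ (shift A 1)
  | .until_ φ ψ, A => ∃ i, sat T ψ (shift A i) ∧ ∀ j < i, sat T φ (shift A j)
  | .ex π φ, A => ∃ t ∈ T, sat T φ (Function.update A π t)
  | .all π φ, A => ∀ t ∈ T, sat T φ (Function.update A π t)

/-- Quantifier-free formulas. -/
def quantFree : HLTL → Bool
  | .tt => true
  | .atom _ _ => true
  | .neg φ => quantFree φ
  | .or φ ψ => quantFree φ && quantFree ψ
  | .next φ => quantFree φ
  | .until_ φ ψ => quantFree φ && quantFree ψ
  | .ex _ _ => false
  | .all _ _ => false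

/-- All trace quantifiers occur in a prefix. -/
def prenex : HLTL → Bool
  | .ex _ φ => prenex φ
  | .all _ φ => prenex φ
  | φ => quantFree φ

/-- Free trace variables of a formula. -/
def free : HLTL → Finset ℕ
  | .tt => ∅
  | .atom _ π => {π}
  | .neg φ => free φ
  | .or φ ψ => free φ ∪ free ψ
  | .next φ => free φ
  | .until_ φ ψ => free φ ∪ free ψ
  | .ex π φ => (free φ).erase π
  | .all π φ => (free φ).erase π

/-- A HyperLTL formula (as in the grammar): a closed sentence with all
trace quantifiers in a prefix. -/
def Sentence (ψ : HLTL) : Prop := prenex ψ = true ∧ free ψ = ∅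

/-- `T` satisfies `ψ`: `T` is nonempty and `∅ ⊨_T ψ` (for closed `ψ` the
trace assignment is irrelevant, so we quantify over all assignments). -/
def SatBy (T : Set Trace) (ψ : HLTL) : Prop :=
  T.Nonempty ∧ ∀ A : ℕ → Trace, sat T ψ A

/-- HyperLTL satisfiability. -/
def Satisfiable (ψ : HLTL) : Prop := ∃ T : Set Trace, SatBy T ψ

/-- A computable injective Gödel encoding of HyperLTL formulas. -/
def encode : HLTL → ℕ
  | .tt => 0
  | .atom a π => 8 * Nat.pair a π + 1
  | .neg φ => 8 * encode φ + 2
  | .or φ ψ => 8 * Nat.pair (encode φ) (encode ψ) + 3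
  | .next φ => 8 * encode φ + 4
  | .until_ φ ψ => 8 * Nat.pair (encode φ) (encode ψ) + 5
  | .ex π φ => 8 * Nat.pair π (encode φ) + 6
  | .all π φ => 8 * Nat.pair π (encode φ) + 7

end HLTL

/-- The set of Gödel codes of satisfiable (closed, prenex) HyperLTL formulas. -/
def HyperLTLSatCode (n : ℕ) : Prop :=
  ∃ ψ : HLTL, HLTL.Sentence ψ ∧ HLTL.encode ψ = n ∧ HLTL.Satisfiable ψ

/-- A predicate on ℕ is computably enumerable iff it is the domain of a
partial computable function. -/
def REpred (p : ℕ → Prop) : Prop :=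
  ∃ f : ℕ →. ℕ, Partrec f ∧ ∀ n, p n ↔ (f n).Dom


/-! ### Auxiliary development: reduction from the halting problem -/

namespace HSat
open HLTL

/-! #### Derived connectives and their semantics -/

def fand (φ ψ : HLTL) : HLTL := .neg (.or (.neg φ) (.neg ψ))
def fX : ℕ → HLTL → HLTL
  | 0, φ => φ
  | n+1, φ => .next (fX n φ)
def fG (φ : HLTL) : HLTL := .neg (.until_ .tt (.neg φ))
def fF (φ : HLTL) : HLTL := .until_ .tt φ
def fiff (φ ψ : HLTL) : HLTL := fand (.or (.neg φ) ψ) (.or (.neg ψ) φ)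
def bigAnd (l : List HLTL) : HLTL := l.foldr fand .tt
def bigOr (l : List HLTL) : HLTL := l.foldr .or (.neg .tt)
def lit (b : Bool) (a π : ℕ) : HLTL := cond b (.atom a π) (.neg (.atom a π))

@[simp] lemma shift_shift (A : ℕ → Trace) (i j : ℕ) :
    shift (shift A i) j = shift A (j + i) := by
  funext π n; simp [shift, Nat.add_assoc]

@[simp] lemma shift_zero (A : ℕ → Trace) : shift A 0 = A := by funext π n; simp [shift]

@[simp] lemma shift_apply (A : ℕ → Trace) (i π n : ℕ) : shift A i π n = A π (n + i) := rfl

variable {T : Set Trace}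

@[simp] lemma sat_tt (A) : sat T .tt A := trivial
lemma sat_atom (a π A) : sat T (.atom a π) A ↔ a ∈ A π 0 := Iff.rfl
lemma sat_neg (φ A) : sat T (.neg φ) A ↔ ¬ sat T φ A := Iff.rfl
lemma sat_or (φ ψ A) : sat T (.or φ ψ) A ↔ sat T φ A ∨ sat T ψ A := Iff.rfl
lemma sat_next (φ A) : sat T (.next φ) A ↔ sat T φ (shift A 1) := Iff.rfl

@[simp] lemma sat_fand (φ ψ A) : sat T (fand φ ψ) A ↔ sat T φ A ∧ sat T ψ A := by
  simp only [fand, sat]; tauto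

@[simp] lemma sat_fX (n φ A) : sat T (fX n φ) A ↔ sat T φ (shift A n) := by
  induction n generalizing A with
  | zero => simp [fX]
  | succ n ih => simpa [fX, sat, ih] using Iff.rfl

@[simp] lemma sat_fG (φ A) : sat T (fG φ) A ↔ ∀ i, sat T φ (shift A i) := by
  simp [fG, sat]

@[simp] lemma sat_fF (φ A) : sat T (fF φ) A ↔ ∃ i, sat T φ (shift A i) := by
  simp [fF, sat]

@[simp] lemma sat_fiff (φ ψ A) : sat T (fiff φ ψ) A ↔ (sat T φ A ↔ sat T ψ A) := by
  simp only [fiff, sat_fand, sat_or, sat_neg]; tauto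

@[simp] lemma sat_bigAnd (l A) : sat T (bigAnd l) A ↔ ∀ φ ∈ l, sat T φ A := by
  induction l with
  | nil => simp [bigAnd]
  | cons φ l ih =>
    show sat T (fand φ (bigAnd l)) A ↔ _
    simp [ih]

@[simp] lemma sat_bigOr (l A) : sat T (bigOr l) A ↔ ∃ φ ∈ l, sat T φ A := by
  induction l with
  | nil => simp [bigOr, sat_neg]
  | cons φ l ih =>
    show sat T (.or φ (bigOr l)) A ↔ _
    simp [sat_or, ih]

@[simp] lemma sat_lit (b a π A) : sat T (lit b a π) A ↔ (a ∈ A π 0 ↔ b = true) := by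
  cases b <;> simp [lit, sat_atom, sat_neg]

end HSat


namespace HSat
open Turing Turing.TM2 Turing.PartrecToTM2 Turing.ToPartrec

/-! #### The universal machine -/

/-- A universal partial function, with the input `e` coded in unary as `2 ^ e - 1`. -/
def gfun : ℕ →. ℕ := fun m =>
  (Nat.rfind fun k => Part.some (decide (m + 1 = 2 ^ k))).bind fun k =>
    (Denumerable.ofNat Nat.Partrec.Code k).eval k

lemma gfun_partrec : Partrec gfun := by
  have hpow : Primrec₂ fun (a b : ℕ) => a ^ b :=
    Primrec₂.unpaired.1 (Primrec.nat_iff.2 Nat.Primrec.pow)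
  have h1 : Primrec₂ fun (m k : ℕ) => decide (m + 1 = 2 ^ k) :=
    PrimrecPred.decide (p := fun a : ℕ × ℕ => a.1 + 1 = 2 ^ a.2)
      (Primrec.eq.comp (Primrec.succ.comp .fst) (hpow.comp (Primrec.const 2) .snd))
  exact Partrec.bind
    (Partrec.rfind (h1.to_comp.partrec₂))
    ((Nat.Partrec.Code.eval_part.comp ((Computable.ofNat _).comp .snd) .snd))

lemma gfun_dom (e : ℕ) :
    (gfun (2 ^ e - 1)).Dom ↔ ((Denumerable.ofNat Nat.Partrec.Code e).eval e).Dom := by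
  have hpos : 1 ≤ 2 ^ e := Nat.one_le_two_pow
  have hm : 2 ^ e - 1 + 1 = 2 ^ e := by omega
  have he : e ∈ Nat.rfind fun k => Part.some (decide (2 ^ e - 1 + 1 = 2 ^ k)) := by
    refine Nat.mem_rfind.2 ?_
    constructor
    · simp [hm]
    · intro m hme
      have : 2 ^ m < 2 ^ e := Nat.pow_lt_pow_right (by norm_num) hme
      simp [hm]
      omega
  show ((Nat.rfind _).bind _).Dom ↔ _
  rw [Part.dom_iff_mem]
  constructor
  · rintro ⟨b, hb⟩
    obtain ⟨a, ha, hb'⟩ := Part.mem_bind_iff.1 hb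
    cases Part.mem_unique ha he
    exact Part.dom_iff_mem.2 ⟨b, hb'⟩
  · intro h
    obtain ⟨b, hb⟩ := Part.dom_iff_mem.1 h
    exact ⟨b, Part.mem_bind_iff.2 ⟨e, he, hb⟩⟩

/-- A `ToPartrec.Code` computing `gfun`. -/
noncomputable def cU : Code :=
  (Code.exists_code (n := 1) (f := fun v => gfun v.head)
    (Nat.Partrec'.part_iff₁.2 gfun_partrec)).choose

lemma cU_spec (m : ℕ) : cU.eval [m] = pure <$> gfun m := by
  have := (Code.exists_code (n := 1) (f := fun v => gfun v.head)
    (Nat.Partrec'.part_iff₁.2 gfun_partrec)).choose_spec (m ::ᵥ List.Vector.nil)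
  exact this

lemma cU_dom (m : ℕ) : (cU.eval [m]).Dom ↔ (gfun m).Dom := by
  rw [cU_spec]
  exact Iff.rfl

/-- The support of the universal machine: a fixed finite set of states. -/
noncomputable def S : Finset Λ' := codeSupp cU Cont'.halt

noncomputable def SL : List Λ' := S.toList

/-- The initial state of the universal machine. -/
noncomputable def q0 : Λ' := trNormal cU Cont'.halt

/-- The list of all relevant (optional) states. -/
noncomputable def optSL : List (Option Λ') := none :: SL.map some

lemma q0_mem : q0 ∈ S := by
  apply codeSupp_self
  cases h : trNormal cU Cont'.halt <;> simp [q0, trStmts₁, h]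

lemma hS2 : ∀ q ∈ S, SupportsStmt S (tr q) := (tr_supports cU Cont'.halt).2

lemma mem_optSL_none : (none : Option Λ') ∈ optSL := by simp [optSL]
lemma mem_optSL_some {q : Λ'} (h : q ∈ S) : (some q : Option Λ') ∈ optSL := by
  simp [optSL, SL, h]
lemma mem_SL_iff {q : Λ'} : q ∈ SL ↔ q ∈ S := by simp [SL]

/-! #### Atom numbering -/

def gIdx : Γ' → ℕ
  | .consₗ => 0
  | .cons => 1
  | .bit0 => 2
  | .bit1 => 3

def kIdx : K' → ℕ
  | .main => 0
  | .rev => 1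
  | .aux => 2
  | .stack => 3

/-- countdown atom -/
def bA : ℕ := 0
/-- internal state atoms -/
def vA : Option Γ' → ℕ
  | none => 1
  | some γ => 2 + gIdx γ
/-- stack content atoms -/
def sA (k : K') (γ : Γ') : ℕ := 6 + 4 * kIdx k + gIdx γ
/-- machine label atoms -/
noncomputable def qA : Option Λ' → ℕ
  | none => 22
  | some q => 23 + SL.idxOf q

instance : Fintype K' :=
  ⟨⟨{ K'.main, K'.rev, K'.aux, K'.stack }, by decide⟩, fun x => by cases x <;> decide⟩

lemma vA_inj : ∀ {s s' : Option Γ'}, vA s = vA s' → s = s' := by decide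
lemma sA_inj : ∀ {k k' γ γ'}, sA k γ = sA k' γ' → k = k' ∧ γ = γ' := by decide
lemma vA_range : ∀ s, 1 ≤ vA s ∧ vA s ≤ 5 := by decide
lemma sA_range : ∀ k γ, 6 ≤ sA k γ ∧ sA k γ ≤ 21 := by decide
lemma qA_range : ∀ o, 22 ≤ qA o := by
  rintro (_ | q)
  · exact le_refl _
  · show 22 ≤ 23 + SL.idxOf q; omega
lemma qA_inj : ∀ {o o' : Option Λ'}, o ∈ optSL → o' ∈ optSL → qA o = qA o' → o = o' := by
  rintro (_ | q) (_ | q') ho ho' h <;> simp [qA] at h ⊢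
  · omega
  · omega
  · simp only [optSL, List.mem_cons, List.mem_map, reduceCtorEq, false_or] at ho ho'
    obtain ⟨qq, hq, e1⟩ := ho; obtain ⟨qq', hq', e2⟩ := ho'
    cases e1; cases e2
    exact (List.idxOf_inj hq).1 h

/-! #### Representation of configurations as traces -/

/-- The trace encoding a configuration together with countdown value `m`. -/
noncomputable def traceOf (cfg : Cfg') (m : ℕ) : Trace := fun i =>
  {a | (a = bA ∧ i < m) ∨ (a = vA cfg.var ∧ i = 0) ∨ (a = qA cfg.l ∧ i = 0) ∨
    ∃ k γ, a = sA k γ ∧ (cfg.stk k)[i]? = some γ}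

/-- `t` represents configuration `cfg` with countdown `m`. -/
structure Rep (cfg : Cfg') (m : ℕ) (t : Trace) : Prop where
  hb : ∀ i, bA ∈ t i ↔ i < m
  hv : ∀ s, vA s ∈ t 0 ↔ s = cfg.var
  hq : ∀ o ∈ optSL, (qA o ∈ t 0 ↔ o = cfg.l)
  hs : ∀ k γ i, sA k γ ∈ t i ↔ (cfg.stk k)[i]? = some γ

lemma rep_traceOf (cfg : Cfg') (m : ℕ) (hl : cfg.l ∈ optSL) : Rep cfg m (traceOf cfg m) := by
  have hb' := bA
  constructor
  · intro i
    simp only [traceOf, Set.mem_setOf_eq]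
    constructor
    · rintro (⟨_, h⟩ | ⟨h, _⟩ | ⟨h, _⟩ | ⟨k, γ, h, _⟩)
      · exact h
      · have := vA_range cfg.var; simp [bA] at h; omega
      · have := qA_range cfg.l; simp [bA] at h; omega
      · have := sA_range k γ; simp [bA] at h; omega
    · intro h; exact Or.inl ⟨by trivial, h⟩
  · intro s
    simp only [traceOf, Set.mem_setOf_eq]
    constructor
    · rintro (⟨h, hi⟩ | ⟨h, _⟩ | ⟨h, _⟩ | ⟨k, γ, h, _⟩)
      · have := vA_range s; simp [bA] at h; omega
      · exact vA_inj h
      · have := vA_range s; have := qA_range cfg.l; omega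
      · have := vA_range s; have := sA_range k γ; omega
    · rintro rfl; exact Or.inr (Or.inl ⟨by trivial, by trivial⟩)
  · intro o ho
    simp only [traceOf, Set.mem_setOf_eq]
    constructor
    · rintro (⟨h, hi⟩ | ⟨h, _⟩ | ⟨h, _⟩ | ⟨k, γ, h, _⟩)
      · have := qA_range o; simp [bA] at h; omega
      · have := qA_range o; have := vA_range cfg.var; omega
      · exact qA_inj ho hl h
      · have := qA_range o; have := sA_range k γ; omega
    · rintro rfl; exact Or.inr (Or.inr (Or.inl ⟨by trivial, by trivial⟩))
  · intro k γ i
    simp only [traceOf, Set.mem_setOf_eq]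
    constructor
    · rintro (⟨h, hi⟩ | ⟨h, hi⟩ | ⟨h, hi⟩ | ⟨k', γ', h, hg⟩)
      · have := sA_range k γ; simp [bA] at h; omega
      · have := sA_range k γ; have := vA_range cfg.var; omega
      · have := sA_range k γ; have := qA_range cfg.l; omega
      · obtain ⟨rfl, rfl⟩ := sA_inj h; exact hg
    · intro h; exact Or.inr (Or.inr (Or.inr ⟨k, γ, by trivial, h⟩))

/-! #### The input word -/

/-- The unary coding of the input `e`, as a stack word. -/
def inputW (e : ℕ) : List Γ' := List.replicate e Γ'.bit1 ++ [Γ'.cons]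

lemma trNat_pow (e : ℕ) : trNat (2 ^ e - 1) = List.replicate e Γ'.bit1 := by
  induction e with
  | zero => simp [trNat_zero]
  | succ e ih =>
    have h2 : (2 ^ (e + 1) - 1 : ℕ) = 2 * (2 ^ e - 1) + 1 := by
      have : 1 ≤ 2 ^ e := Nat.one_le_two_pow
      rw [pow_succ]; omega
    rw [h2]
    have key : ∀ n : ℕ, trNat (2 * n + 1) = Γ'.bit1 :: trNat n := by
      intro n
      show trNum ((2 * n + 1 : ℕ) : Num) = Γ'.bit1 :: trNum (n : Num)
      have hc : ((2 * n + 1 : ℕ) : Num) = ((n : Num) + (n : Num)) + 1 := by push_cast; ring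
      rw [hc]
      cases hn : (n : Num) with
      | zero => rfl
      | pos p =>
        have : (Num.pos p + Num.pos p + 1 : Num) = Num.pos p.bit1 := by
          rw [← Num.to_nat_inj]
          simp [Num.add_to_nat, Num.cast_pos, PosNum.cast_bit1]
        rw [this]
        rfl
    rw [key, ih, List.replicate_succ]

lemma trList_inputW (e : ℕ) : trList [2 ^ e - 1] = inputW e := by
  simp [trList, inputW, trNat_pow]

end HSat


namespace HSat
open HLTL Turing Turing.TM2 Turing.PartrecToTM2 Turing.ToPartrec

/-! #### Alphabet enumerations -/

def Γlist : List Γ' := [.consₗ, .cons, .bit0, .bit1]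
def σlist : List (Option Γ') := none :: Γlist.map some
def Klist : List K' := [.main, .rev, .aux, .stack]

lemma mem_Γlist (γ : Γ') : γ ∈ Γlist := by cases γ <;> simp [Γlist]
lemma mem_σlist (s : Option Γ') : s ∈ σlist := by
  rcases s with _ | γ
  · simp [σlist]
  · cases γ <;> simp [σlist, Γlist]
lemma mem_Klist (k : K') : k ∈ Klist := by cases k <;> simp [Klist]

/-! #### Formula pieces -/

variable {T : Set Trace}

/-- position 0 on trace `π` carries exactly the stack-`k` symbol `γ`. -/
def exactS (π : ℕ) (k : K') (γ : Γ') : HLTL :=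
  bigAnd (Γlist.map fun γ' => lit (decide (γ' = γ)) (sA k γ') π)

@[simp] lemma sat_exactS (π k γ A) :
    sat T (exactS π k γ) A ↔ ∀ γ', (sA k γ' ∈ A π 0 ↔ γ' = γ) := by
  simp only [exactS, sat_bigAnd, List.mem_map, forall_exists_index, and_imp]
  constructor
  · intro h γ'
    have := h _ γ' (mem_Γlist γ') rfl
    simpa [eq_comm] using this
  · rintro h φ γ' _ rfl
    simpa [eq_comm] using h γ'

/-- position 0 on trace `π` carries no stack-`k` symbol. -/
def noS (π : ℕ) (k : K') : HLTL :=
  bigAnd (Γlist.map fun γ' => .neg (.atom (sA k γ') π))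

@[simp] lemma sat_noS (π k A) :
    sat T (noS π k) A ↔ ∀ γ', sA k γ' ∉ A π 0 := by
  simp only [noS, sat_bigAnd, List.mem_map, forall_exists_index, and_imp]
  constructor
  · intro h γ'
    have := h _ γ' (mem_Γlist γ') rfl
    simpa [sat_neg, sat_atom] using this
  · rintro h φ γ' _ rfl
    simpa [sat_neg, sat_atom] using h γ'

/-- the top-of-stack-`k` at position `n` of trace `1` reads `s`. -/
def guard (k : K') (n : ℕ) (s : Option Γ') : HLTL :=
  fX n (match s with
    | some γ => .atom (sA k γ) 1
    | none => noS 1 k)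

lemma sat_guard {L : K' → List Γ'} {A : ℕ → Trace}
    (hs : ∀ k γ i, sA k γ ∈ A 1 i ↔ (L k)[i]? = some γ) (k n s) :
    sat T (guard k n s) A ↔ (L k)[n]? = s := by
  rcases s with _ | γ
  · simp only [guard, sat_fX, sat_noS, shift_apply, Nat.zero_add]
    constructor
    · intro h
      rcases hLk : (L k)[n]? with _ | γ'
      · rfl
      · exact absurd ((hs k γ' n).2 hLk) (h γ')
    · intro h γ' hmem
      rw [hs k γ' n] at hmem
      simp [h] at hmem
  · simp only [guard, sat_fX, sat_atom, shift_apply, Nat.zero_add]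
    exact hs k γ n

/-- trace `π` is at machine state `o`. -/
noncomputable def stateAssert (π : ℕ) (o : Option Λ') : HLTL :=
  bigAnd (optSL.map fun o' => lit (decide (o' = o)) (qA o') π)

lemma sat_stateAssert (π o A) :
    sat T (stateAssert π o) A ↔ ∀ o' ∈ optSL, (qA o' ∈ A π 0 ↔ o' = o) := by
  simp only [stateAssert, sat_bigAnd, List.mem_map, forall_exists_index, and_imp]
  constructor
  · intro h o' ho'
    have := h _ o' ho' rfl
    simpa using this
  · rintro h φ o' ho' rfl
    simpa using h o' ho'

/-- trace `π` has internal state `s`. -/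
def varAssert (π : ℕ) (s : Option Γ') : HLTL :=
  bigAnd (σlist.map fun s' => lit (decide (s' = s)) (vA s') π)

lemma sat_varAssert (π s A) :
    sat T (varAssert π s) A ↔ ∀ s', (vA s' ∈ A π 0 ↔ s' = s) := by
  simp only [varAssert, sat_bigAnd, List.mem_map, forall_exists_index, and_imp]
  constructor
  · intro h s'
    have := h _ s' (mem_σlist s') rfl
    simpa using this
  · rintro h φ s' _ rfl
    simpa using h s'

/-- trace `π` spells the word `w` on stack `k` at its initial positions. -/
def spellAt (π : ℕ) (k : K') : List Γ' → HLTL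
  | [] => .tt
  | γ :: w => fand (exactS π k γ) (.next (spellAt π k w))

lemma sat_spellAt (π k) : ∀ (w : List Γ') (A : ℕ → Trace),
    sat T (spellAt π k w) A ↔ ∀ i < w.length, ∀ γ', (sA k γ' ∈ A π i ↔ w[i]? = some γ') := by
  intro w
  induction w with
  | nil => intro A; simp [spellAt]
  | cons γ w ih =>
    intro A
    simp only [spellAt, sat_fand, sat_next, sat_exactS, ih, shift_apply]
    constructor
    · rintro ⟨h0, hrest⟩ i hi γ'
      match i with
      | 0 => simpa [eq_comm] using h0 γ'
      | i + 1 =>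
        have := hrest i (by simpa using hi) γ'
        simpa using this
    · intro h
      refine ⟨fun γ' => by simpa [eq_comm] using h 0 (by simp) γ', fun i hi γ' => ?_⟩
      have := h (i + 1) (by simpa using hi) γ'
      simpa using this

/-- stack `k` of trace `2` from position `d` equals stack `k` of trace `1` from position `e`. -/
def eqShift (k : K') (d e : ℕ) : HLTL :=
  fG (bigAnd (Γlist.map fun γ => fiff (fX d (.atom (sA k γ) 2)) (fX e (.atom (sA k γ) 1))))

lemma sat_eqShift (k d e A) :
    sat T (eqShift k d e) A ↔ ∀ i γ, (sA k γ ∈ A 2 (d + i) ↔ sA k γ ∈ A 1 (e + i)) := by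
  simp only [eqShift, sat_fG, sat_bigAnd, List.mem_map, forall_exists_index, and_imp,
    sat_fiff, sat_fX, sat_atom, shift_apply, Nat.zero_add]
  constructor
  · intro h i γ
    have := h i _ γ (mem_Γlist γ) rfl
    simpa [sat_atom, shift_apply] using this
  · rintro h i φ γ _ rfl
    simpa [sat_atom, shift_apply] using h i γ

/-- the countdown of trace `2` is one less than that of trace `1`. -/
def bStep : HLTL := fG (fiff (.atom bA 2) (.next (.atom bA 1)))

lemma sat_bStep (A) :
    sat T bStep A ↔ ∀ i, (bA ∈ A 2 i ↔ bA ∈ A 1 (1 + i)) := by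
  simp only [bStep, sat_fG, sat_fiff, sat_next, sat_atom, shift_apply, Nat.zero_add]

/-- Full description of the successor configuration on trace `2`. -/
noncomputable def FINAL (o : Option Λ') (v : Option Γ') (P : K' → List Γ') (C : K' → ℕ) : HLTL :=
  fand (stateAssert 2 o) (fand (varAssert 2 v) (fand bStep
    (bigAnd (Klist.map fun k => fand (spellAt 2 k (P k)) (eqShift k (P k).length (C k))))))

lemma sat_FINAL {m : ℕ} {L : K' → List Γ'} {A : ℕ → Trace}
    (hb : ∀ i, bA ∈ A 1 i ↔ i < m)
    (hs : ∀ k γ i, sA k γ ∈ A 1 i ↔ (L k)[i]? = some γ)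
    (o : Option Λ') (ho : o ∈ optSL) (v : Option Γ') (P : K' → List Γ') (C : K' → ℕ) :
    sat T (FINAL o v P C) A ↔
      Rep ⟨o, v, fun k => P k ++ (L k).drop (C k)⟩ (m - 1) (A 2) := by
  simp only [FINAL, sat_fand, sat_stateAssert, sat_varAssert, sat_bStep, sat_bigAnd,
    List.mem_map, forall_exists_index, and_imp]
  constructor
  · rintro ⟨hq', hv', hb', hstk⟩
    constructor
    · intro i
      rw [hb' i, hb (1 + i)]
      omega
    · exact hv'
    · exact hq'
    · intro k γ i
      have hk := hstk _ k (mem_Klist k) rfl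
      rw [sat_fand, sat_spellAt, sat_eqShift] at hk
      obtain ⟨hsp, hsh⟩ := hk
      show sA k γ ∈ A 2 i ↔ (P k ++ (L k).drop (C k))[i]? = some γ
      by_cases hi : i < (P k).length
      · rw [hsp i hi γ, List.getElem?_append_left hi]
      · push_neg at hi
        have h2 := hsh (i - (P k).length) γ
        rw [Nat.add_sub_cancel' hi] at h2
        rw [h2, hs k γ, List.getElem?_append_right hi, List.getElem?_drop]
  · intro hrep
    refine ⟨hrep.hq, hrep.hv, ?_, ?_⟩
    · intro i
      rw [hrep.hb i, hb (1 + i)]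
      omega
    · rintro φ k _ rfl
      rw [sat_fand, sat_spellAt, sat_eqShift]
      constructor
      · intro i hi γ'
        rw [hrep.hs k γ' i]
        show ((fun k => P k ++ (L k).drop (C k)) k)[i]? = some γ' ↔ _
        rw [List.getElem?_append_left hi]
      · intro i γ
        rw [hrep.hs k γ ((P k).length + i), hs k γ (C k + i)]
        show ((fun k => P k ++ (L k).drop (C k)) k)[(P k).length + i]? = some γ ↔ _
        rw [List.getElem?_append_right (Nat.le_add_right _ _), Nat.add_sub_cancel_left,
          List.getElem?_drop]

end HSat


namespace HSat
open HLTL Turing Turing.TM2 Turing.PartrecToTM2 Turing.ToPartrec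

variable {T : Set Trace}

/-! #### Compiling a TM2 statement into a formula -/

/-- `comp stmt v P C` asserts (on traces `1`, `2`) that trace `2` represents the result of
running `stmt` with internal state `v` where the stacks currently hold `P k` followed by the
original stack contents of trace `1` from position `C k` on, with countdown decremented. -/
noncomputable def comp :
    TM2.Stmt (fun _ : K' => Γ') Λ' (Option Γ') → Option Γ' → (K' → List Γ') → (K' → ℕ) → HLTL
  | .push k f q, v, P, C => comp q v (Function.update P k (f v :: P k)) C
  | .peek k f q, v, P, C =>
    match P k with
    | γ :: _ => comp q (f v (some γ)) P C
    | [] => bigOr (σlist.map fun s => fand (guard k (C k) s) (comp q (f v s) P C))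
  | .pop k f q, v, P, C =>
    match P k with
    | γ :: rest => comp q (f v (some γ)) (Function.update P k rest) C
    | [] => bigOr (σlist.map fun s =>
        fand (guard k (C k) s) (comp q (f v s) P (Function.update C k (C k + 1))))
  | .load g q, v, P, C => comp q (g v) P C
  | .branch p q₁ q₂, v, P, C => if p v then comp q₁ v P C else comp q₂ v P C
  | .goto f, v, P, C => FINAL (some (f v)) v P C
  | .halt, v, P, C => FINAL none v P C

/-- The current virtual stacks. -/
def cur (L P : K' → List Γ') (C : K' → ℕ) : K' → List Γ' :=
  fun k => P k ++ (L k).drop (C k)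

lemma cur_updP (L P : K' → List Γ') (C : K' → ℕ) (k : K') (w : List Γ') :
    cur L (Function.update P k w) C = Function.update (cur L P C) k (w ++ (L k).drop (C k)) := by
  funext k'
  by_cases h : k' = k
  · subst h; simp [cur]
  · simp [cur, Function.update_of_ne h]

lemma cur_updC (L P : K' → List Γ') (C : K' → ℕ) (k : K') (hPk : P k = []) :
    cur L P (Function.update C k (C k + 1)) =
      Function.update (cur L P C) k ((L k).drop (C k + 1)) := by
  funext k'
  by_cases h : k' = k
  · subst h; simp [cur, hPk]
  · simp [cur, Function.update_of_ne h]

lemma sat_comp {m : ℕ} {L : K' → List Γ'} {A : ℕ → Trace}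
    (hb : ∀ i, bA ∈ A 1 i ↔ i < m)
    (hs : ∀ k γ i, sA k γ ∈ A 1 i ↔ (L k)[i]? = some γ) :
    ∀ (stmt : TM2.Stmt (fun _ : K' => Γ') Λ' (Option Γ')) (v : Option Γ')
      (P : K' → List Γ') (C : K' → ℕ), SupportsStmt S stmt →
      (sat T (comp stmt v P C) A ↔
        Rep (stepAux stmt v (cur L P C)) (m - 1) (A 2)) := by
  intro stmt
  induction stmt with
  | push k f q IH =>
    intro v P C hsupp
    have : Function.update (cur L P C) k (f v :: cur L P C k) =
        cur L (Function.update P k (f v :: P k)) C := by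
      rw [cur_updP]; rfl
    rw [show comp (.push k f q) v P C = comp q v (Function.update P k (f v :: P k)) C from rfl,
      stepAux, this]
    exact IH v _ C hsupp
  | peek k f q IH =>
    intro v P C hsupp
    cases hPk : P k with
    | cons γ rest =>
      have hhd : (cur L P C k).head? = some γ := by simp [cur, hPk]
      rw [show comp (.peek k f q) v P C =
          (match P k with
          | γ :: _ => comp q (f v (some γ)) P C
          | [] => bigOr (σlist.map fun s => fand (guard k (C k) s) (comp q (f v s) P C)))
          from rfl, hPk, stepAux, hhd]
      exact IH _ P C hsupp
    | nil =>
      have hhd : (cur L P C k).head? = (L k)[C k]? := by simp [cur, hPk]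
      rw [show comp (.peek k f q) v P C =
          (match P k with
          | γ :: _ => comp q (f v (some γ)) P C
          | [] => bigOr (σlist.map fun s => fand (guard k (C k) s) (comp q (f v s) P C)))
          from rfl, hPk, stepAux, hhd]
      rw [sat_bigOr]
      constructor
      · rintro ⟨φ, hmem, hφ⟩
        obtain ⟨s, _, rfl⟩ := List.mem_map.1 hmem
        rw [sat_fand, sat_guard hs] at hφ
        obtain ⟨rfl, hφ⟩ := hφ
        exact (IH _ P C hsupp).1 hφ
      · intro h
        refine ⟨_, List.mem_map.2 ⟨(L k)[C k]?, mem_σlist _, rfl⟩, ?_⟩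
        rw [sat_fand, sat_guard hs]
        exact ⟨rfl, (IH _ P C hsupp).2 h⟩
  | pop k f q IH =>
    intro v P C hsupp
    cases hPk : P k with
    | cons γ rest =>
      have hhd : (cur L P C k).head? = some γ := by simp [cur, hPk]
      have htl : Function.update (cur L P C) k ((cur L P C k).tail) =
          cur L (Function.update P k rest) C := by
        rw [cur_updP]
        congr 1
        simp [cur, hPk]
      rw [show comp (.pop k f q) v P C =
          (match P k with
          | γ :: rest => comp q (f v (some γ)) (Function.update P k rest) C
          | [] => bigOr (σlist.map fun s =>
              fand (guard k (C k) s) (comp q (f v s) P (Function.update C k (C k + 1)))))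
          from rfl, hPk, stepAux, hhd, htl]
      exact IH _ _ C hsupp
    | nil =>
      have hhd : (cur L P C k).head? = (L k)[C k]? := by simp [cur, hPk]
      have htl : Function.update (cur L P C) k ((cur L P C k).tail) =
          cur L P (Function.update C k (C k + 1)) := by
        rw [cur_updC L P C k hPk]
        congr 1
        simp [cur, hPk, List.tail_drop]
      rw [show comp (.pop k f q) v P C =
          (match P k with
          | γ :: rest => comp q (f v (some γ)) (Function.update P k rest) C
          | [] => bigOr (σlist.map fun s =>
              fand (guard k (C k) s) (comp q (f v s) P (Function.update C k (C k + 1)))))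
          from rfl, hPk, stepAux, hhd, htl]
      rw [sat_bigOr]
      constructor
      · rintro ⟨φ, hmem, hφ⟩
        obtain ⟨s, _, rfl⟩ := List.mem_map.1 hmem
        rw [sat_fand, sat_guard hs] at hφ
        obtain ⟨rfl, hφ⟩ := hφ
        exact (IH _ P _ hsupp).1 hφ
      · intro h
        refine ⟨_, List.mem_map.2 ⟨(L k)[C k]?, mem_σlist _, rfl⟩, ?_⟩
        rw [sat_fand, sat_guard hs]
        exact ⟨rfl, (IH _ P _ hsupp).2 h⟩
  | load g q IH =>
    intro v P C hsupp
    rw [show comp (.load g q) v P C = comp q (g v) P C from rfl, stepAux]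
    exact IH _ P C hsupp
  | branch p q₁ q₂ IH₁ IH₂ =>
    intro v P C hsupp
    rw [show comp (.branch p q₁ q₂) v P C =
      (if p v then comp q₁ v P C else comp q₂ v P C) from rfl, stepAux]
    cases hpv : p v
    · simp only [if_false, cond_false]
      exact IH₂ v P C hsupp.2
    · simp only [if_true, cond_true]
      exact IH₁ v P C hsupp.1
  | goto f =>
    intro v P C hsupp
    rw [show comp (.goto f) v P C = FINAL (some (f v)) v P C from rfl, stepAux]
    exact sat_FINAL hb hs _ (mem_optSL_some (hsupp v)) v P C
  | halt =>
    intro v P C _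
    rw [show comp .halt v P C = FINAL none v P C from rfl, stepAux]
    exact sat_FINAL hb hs _ mem_optSL_none v P C

end HSat


namespace HSat
open HLTL Turing Turing.TM2 Turing.PartrecToTM2 Turing.ToPartrec

variable {T : Set Trace}

lemma sat_ex (π φ A) : sat T (.ex π φ) A ↔ ∃ t ∈ T, sat T φ (Function.update A π t) := Iff.rfl
lemma sat_all (π φ A) : sat T (.all π φ) A ↔ ∀ t ∈ T, sat T φ (Function.update A π t) := Iff.rfl

lemma cur_nil (L : K' → List Γ') : cur L (fun _ => []) (fun _ => 0) = L := by
  funext k; simp [cur]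

lemma stepAux_supports : ∀ (stmt : TM2.Stmt (fun _ : K' => Γ') Λ' (Option Γ'))
    (v : Option Γ') (stk : K' → List Γ'), SupportsStmt S stmt →
    (stepAux stmt v stk).l ∈ optSL := by
  intro stmt
  induction stmt with
  | push k f q IH => intro v stk h; exact IH _ _ h
  | peek k f q IH => intro v stk h; exact IH _ _ h
  | pop k f q IH => intro v stk h; exact IH _ _ h
  | load g q IH => intro v stk h; exact IH _ _ h
  | branch p q₁ q₂ IH₁ IH₂ =>
    intro v stk h
    rw [stepAux]
    cases p v
    · exact IH₂ _ _ h.2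
    · exact IH₁ _ _ h.1
  | goto f => intro v stk h; exact mem_optSL_some (h v)
  | halt => intro v stk _; exact mem_optSL_none

/-! #### The initial-configuration formula -/

/-- well-formedness of the countdown on trace `0`: a finite prefix. -/
def bWF : HLTL :=
  fand (fG (.or (.atom bA 0) (.neg (.next (.atom bA 0))))) (fF (.neg (.atom bA 0)))

def stkInit (w : List Γ') (k : K') : HLTL :=
  if k = K'.main then fand (spellAt 0 K'.main w) (fX w.length (fG (noS 0 K'.main)))
  else fG (noS 0 k)

noncomputable def InitF (w : List Γ') : HLTL :=
  fand (stateAssert 0 (some q0)) (fand (varAssert 0 none)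
    (fand bWF (bigAnd (Klist.map (stkInit w)))))

lemma initStk_main (w : List Γ') : K'.elim w ([] : List Γ') [] [] K'.main = w := rfl

lemma sat_stkInit {w : List Γ'} {A : ℕ → Trace} (k : K') :
    sat T (stkInit w k) A ↔
      ∀ γ i, (sA k γ ∈ A 0 i ↔ (K'.elim w ([] : List Γ') [] [] k)[i]? = some γ) := by
  by_cases hk : k = K'.main
  · subst hk
    rw [stkInit, if_pos rfl, sat_fand, sat_spellAt, sat_fX, sat_fG]
    constructor
    · rintro ⟨hsp, hbe⟩ γ i
      by_cases hi : i < w.length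
      · exact (hsp i hi γ).trans (by rw [initStk_main])
      · push_neg at hi
        have h2 := hbe (i - w.length)
        rw [sat_noS] at h2
        have h3 := h2 γ
        simp only [shift_apply, Nat.zero_add] at h3
        rw [Nat.sub_add_cancel hi] at h3
        simp only [h3, false_iff, initStk_main]
        intro hc
        rw [List.getElem?_eq_none_iff.2 hi] at hc
        exact nomatch hc
    · intro h
      constructor
      · intro i hi γ'
        rw [h γ' i, initStk_main]
      · intro i
        rw [sat_noS]
        intro γ'
        simp only [shift_apply, Nat.zero_add]
        rw [h γ' (i + w.length), initStk_main, List.getElem?_eq_none_iff.2 (by omega)]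
        simp
  · rw [stkInit, if_neg hk, sat_fG]
    have helim : K'.elim w ([] : List Γ') [] [] k = [] := by
      cases k
      · exact absurd rfl hk
      all_goals rfl
    rw [helim]
    constructor
    · intro h γ i
      have h2 := h i
      rw [sat_noS] at h2
      have h3 := h2 γ
      simp only [shift_apply, Nat.zero_add] at h3
      simp [h3]
    · intro h i
      rw [sat_noS]
      intro γ'
      simp only [shift_apply, Nat.zero_add]
      rw [h γ' i]
      simp

/-- The starting configuration with input word `w`. -/
noncomputable def initCfg (w : List Γ') : Cfg' :=
  ⟨some q0, none, K'.elim w [] [] []⟩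

lemma InitF_extract {w : List Γ'} {A : ℕ → Trace} (h : sat T (InitF w) A) :
    ∃ m, Rep (initCfg w) m (A 0) := by
  classical
  simp only [InitF, bWF, sat_fand] at h
  obtain ⟨hst, hv, ⟨hpre, hfin⟩, hstk⟩ := h
  rw [sat_fF] at hfin
  obtain ⟨i0, hi0⟩ := hfin
  rw [sat_neg, sat_atom] at hi0
  simp only [shift_apply, Nat.zero_add] at hi0
  have hex : ∃ i, bA ∉ A 0 i := ⟨i0, hi0⟩
  rw [sat_fG] at hpre
  have hdown : ∀ i, bA ∈ A 0 (1 + i) → bA ∈ A 0 i := by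
    intro i hbi
    have := hpre i
    rw [sat_or, sat_atom, sat_neg, sat_next, sat_atom] at this
    simp only [shift_apply, Nat.zero_add] at this
    rcases this with h | h
    · exact h
    · exact absurd (by simpa [Nat.add_comm] using hbi) h
  refine ⟨Nat.find hex, ?_⟩
  constructor
  · intro i
    constructor
    · intro hbi
      by_contra hge
      push_neg at hge
      have hstep : ∀ d, bA ∈ A 0 (Nat.find hex + d) → bA ∈ A 0 (Nat.find hex) := by
        intro d
        induction d with
        | zero => exact fun h => h
        | succ d ih =>
          intro hbd
          exact ih (hdown _ (by simpa [Nat.add_comm, Nat.add_assoc, Nat.add_left_comm] using hbd))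
      have : bA ∈ A 0 (Nat.find hex) :=
        hstep (i - Nat.find hex) (by rwa [Nat.add_sub_cancel' hge])
      exact Nat.find_spec hex this
    · intro hi
      have := Nat.find_min hex hi
      simpa using this
  · intro s
    rw [sat_varAssert] at hv
    exact hv s
  · intro o ho
    rw [sat_stateAssert] at hst
    exact hst o ho
  · intro k γ i
    rw [sat_bigAnd] at hstk
    have := hstk _ (List.mem_map.2 ⟨k, mem_Klist k, rfl⟩)
    rw [sat_stkInit] at this
    exact this γ i

lemma InitF_sat {w : List Γ'} {A : ℕ → Trace} {n : ℕ}
    (hrep : Rep (initCfg w) n (A 0)) : sat T (InitF w) A := by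
  simp only [InitF, bWF, sat_fand]
  refine ⟨?_, ?_, ⟨?_, ?_⟩, ?_⟩
  · rw [sat_stateAssert]; exact hrep.hq
  · rw [sat_varAssert]; exact hrep.hv
  · rw [sat_fG]
    intro i
    rw [sat_or, sat_atom, sat_neg, sat_next, sat_atom]
    simp only [shift_apply, Nat.zero_add]
    by_cases hbi : bA ∈ A 0 i
    · exact Or.inl hbi
    · refine Or.inr fun hc => hbi ?_
      rw [hrep.hb] at *
      omega
  · rw [sat_fF]
    refine ⟨n, ?_⟩
    rw [sat_neg, sat_atom]
    simp only [shift_apply, Nat.zero_add]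
    rw [hrep.hb]
    omega
  · rw [sat_bigAnd]
    intro φ hφ
    obtain ⟨k, _, rfl⟩ := List.mem_map.1 hφ
    rw [sat_stkInit]
    intro γ i
    exact hrep.hs k γ i

/-! #### The step formula and the full sentence -/

noncomputable def STEPF : HLTL :=
  bigOr (SL.map fun q => bigOr (σlist.map fun v =>
    fand (.atom (qA (some q)) 1)
      (fand (.atom (vA v) 1) (comp (tr q) v (fun _ => []) (fun _ => 0)))))

noncomputable def bodyF (w : List Γ') : HLTL :=
  fand (InitF w) (.or (.atom (qA none) 1) (fand (.atom bA 1) STEPF))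

noncomputable def ψform (e : ℕ) : HLTL :=
  .ex 0 (.all 1 (.ex 2 (bodyF (inputW e))))

lemma initCfg_eq (e : ℕ) : Turing.PartrecToTM2.init cU [2 ^ e - 1] = initCfg (inputW e) := by
  rw [Turing.PartrecToTM2.init, initCfg, trList_inputW, q0]

/-! #### Soundness -/

lemma chase {A1 : ℕ → Trace}
    (hstep : ∀ t ∈ T, ∃ t' ∈ T,
      sat T (.or (.atom (qA none) 1) (fand (.atom bA 1) STEPF))
        (Function.update (Function.update A1 1 t) 2 t')) :
    ∀ m (cfg : Cfg') (t : Trace), t ∈ T → Rep cfg m t → cfg.l ∈ optSL →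
      ∃ cf, StateTransition.Reaches (TM2.step tr) cfg cf ∧ cf.l = none := by
  intro m
  induction m using Nat.strong_induction_on with
  | _ m IH =>
    intro cfg t htT hrep hlopt
    rcases hl : cfg.l with _ | q
    · exact ⟨cfg, Relation.ReflTransGen.refl, hl⟩
    · have hqS : q ∈ S := by
        rcases (by simpa [optSL] using hlopt) with h | ⟨q', hq', he⟩
        · rw [hl] at h; exact nomatch h
        · rw [hl] at he
          cases he
          exact mem_SL_iff.1 hq'
      obtain ⟨t', ht'T, hsat⟩ := hstep t htT
      set A := Function.update (Function.update A1 1 t) 2 t' with hA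
      have hA1 : A 1 = t := by simp [hA, Function.update]
      have hA2 : A 2 = t' := by simp [hA]
      rw [sat_or] at hsat
      rcases hsat with hsat | hsat
      · rw [sat_atom, hA1] at hsat
        have hcontr := (hrep.hq none mem_optSL_none).1 hsat
        rw [hl] at hcontr
        exact nomatch hcontr
      · rw [sat_fand, sat_atom, hA1] at hsat
        obtain ⟨hb0, hsat⟩ := hsat
        have hm : 0 < m := (hrep.hb 0).1 hb0
        rw [STEPF, sat_bigOr] at hsat
        obtain ⟨φ, hφmem, hφ⟩ := hsat
        obtain ⟨q', hq'SL, rfl⟩ := List.mem_map.1 hφmem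
        rw [sat_bigOr] at hφ
        obtain ⟨φ, hφmem2, hφ⟩ := hφ
        obtain ⟨v', _, rfl⟩ := List.mem_map.1 hφmem2
        rw [sat_fand, sat_fand, sat_atom, sat_atom, hA1] at hφ
        obtain ⟨hq'at, hv'at, hcomp⟩ := hφ
        have hq'eq : q' = q := by
          have := (hrep.hq (some q') (mem_optSL_some (mem_SL_iff.1 hq'SL))).1 hq'at
          rw [hl] at this
          exact Option.some.inj this
        have hv'eq : v' = cfg.var := (hrep.hv v').1 hv'at
        subst hv'eq
        rw [← hq'eq] at hl
        have hq'S : q' ∈ S := mem_SL_iff.1 hq'SL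
        have hb' : ∀ i, bA ∈ A 1 i ↔ i < m := by rw [hA1]; exact hrep.hb
        have hs' : ∀ k γ i, sA k γ ∈ A 1 i ↔ (cfg.stk k)[i]? = some γ := by
          rw [hA1]; exact hrep.hs
        have hrep' := (sat_comp hb' hs' (tr q') cfg.var (fun _ => []) (fun _ => 0)
          (hS2 q' hq'S)).1 hcomp
        rw [cur_nil, hA2] at hrep'
        have hstepeq : TM2.step tr cfg = some (stepAux (tr q') cfg.var cfg.stk) := by
          rcases cfg with ⟨l, vv, stk⟩
          cases hl
          rfl
        have hl' : (stepAux (tr q') cfg.var cfg.stk).l ∈ optSL :=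
          stepAux_supports _ _ _ (hS2 q' hq'S)
        obtain ⟨cf, hre, hcfl⟩ := IH (m - 1) (by omega) _ t' ht'T hrep' hl'
        exact ⟨cf, Relation.ReflTransGen.head (by rw [hstepeq]; rfl) hre, hcfl⟩

lemma sound {e : ℕ} (h : Satisfiable (ψform e)) :
    ((Denumerable.ofNat Nat.Partrec.Code e).eval e).Dom := by
  obtain ⟨T, hne, hsat⟩ := h
  have h1 := hsat fun _ _ => (∅ : Set ℕ)
  rw [ψform, sat_ex] at h1
  obtain ⟨t₀, ht₀T, h1⟩ := h1
  rw [sat_all] at h1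
  have hstep : ∀ t ∈ T, ∃ t' ∈ T,
      sat T (.or (.atom (qA none) 1) (fand (.atom bA 1) STEPF))
        (Function.update (Function.update (Function.update (fun _ _ => (∅ : Set ℕ)) 0 t₀) 1 t)
          2 t') := by
    intro t htT
    have h2 := h1 t htT
    rw [sat_ex] at h2
    obtain ⟨t', ht'T, h2⟩ := h2
    rw [bodyF, sat_fand] at h2
    exact ⟨t', ht'T, h2.2⟩
  -- extract the initial configuration representation
  have hinit : ∃ m, Rep (initCfg (inputW e)) m t₀ := by
    obtain ⟨t', ht'T, h2⟩ := h1 t₀ ht₀T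
    rw [bodyF, sat_fand] at h2
    have h3 := InitF_extract h2.1
    have : (Function.update (Function.update (Function.update
        (fun _ _ => (∅ : Set ℕ)) 0 t₀) 1 t₀) 2 t') 0 = t₀ := by
      simp [Function.update]
    rwa [this] at h3
  obtain ⟨m, hrep⟩ := hinit
  obtain ⟨cf, hre, hcfl⟩ := chase hstep m (initCfg (inputW e)) t₀ ht₀T hrep
    (by rw [initCfg]; exact mem_optSL_some q0_mem)
  have hstepnone : TM2.step tr cf = none := by
    obtain ⟨l, vv, stk⟩ := cf
    simp only at hcfl
    subst hcfl
    rfl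
  have hdom : (StateTransition.eval (TM2.step tr) (Turing.PartrecToTM2.init cU [2 ^ e - 1])).Dom := by
    rw [initCfg_eq]
    exact Part.dom_iff_mem.2 ⟨cf, (StateTransition.mem_eval).2 ⟨hre, hstepnone⟩⟩
  rw [Turing.PartrecToTM2.tr_eval, Part.map_eq_map] at hdom
  have hdom2 : (Code.eval cU [2 ^ e - 1]).Dom := hdom
  rw [cU_dom] at hdom2
  rwa [gfun_dom] at hdom2

/-! #### Completeness -/

/-- The machine, from configuration `cfg`, halts within `m` steps. -/
def HW : ℕ → Cfg' → Prop
  | 0, cfg => cfg.l = none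
  | m + 1, cfg => cfg.l = none ∨ ∃ c', TM2.step tr cfg = some c' ∧ HW m c'

lemma reaches_HW {c cf : Cfg'} (hre : StateTransition.Reaches (TM2.step tr) c cf) (hcf : cf.l = none) :
    ∃ n, HW n c := by
  induction hre using Relation.ReflTransGen.head_induction_on with
  | refl => exact ⟨0, hcf⟩
  | head hab _ ih =>
    obtain ⟨n, hn⟩ := ih
    exact ⟨n + 1, Or.inr ⟨_, hab, hn⟩⟩

lemma complete {e : ℕ} (h : ((Denumerable.ofNat Nat.Partrec.Code e).eval e).Dom) :
    Satisfiable (ψform e) := by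
  rw [← gfun_dom, ← cU_dom] at h
  have hdom : (StateTransition.eval (TM2.step tr) (Turing.PartrecToTM2.init cU [2 ^ e - 1])).Dom := by
    rw [Turing.PartrecToTM2.tr_eval, Part.map_eq_map]
    exact h
  obtain ⟨cf, hcf⟩ := Part.dom_iff_mem.1 hdom
  obtain ⟨hre, hnone⟩ := StateTransition.mem_eval.1 hcf
  have hcfl : cf.l = none := by
    obtain ⟨l, vv, stk⟩ := cf
    rcases l with _ | q
    · rfl
    · exact absurd hnone (fun hc => Option.some_ne_none _ hc)
  obtain ⟨n, hn⟩ := reaches_HW hre hcfl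
  rw [initCfg_eq] at hn
  -- the model
  refine ⟨{t | ∃ m cfg, HW m cfg ∧ cfg.l ∈ optSL ∧ t = traceOf cfg m}, ⟨traceOf (initCfg (inputW e)) n, ⟨n, _, hn, (by rw [initCfg]; exact mem_optSL_some q0_mem), rfl⟩⟩, ?_⟩
  intro A
  set T' : Set Trace := {t | ∃ m cfg, HW m cfg ∧ cfg.l ∈ optSL ∧ t = traceOf cfg m} with hT'
  have hinitmem : (none : Option Λ') ∈ optSL ∨ True := Or.inr trivial
  have hq0opt : (initCfg (inputW e)).l ∈ optSL := by rw [initCfg]; exact mem_optSL_some q0_mem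
  rw [ψform, sat_ex]
  refine ⟨traceOf (initCfg (inputW e)) n, ⟨n, _, hn, hq0opt, rfl⟩, ?_⟩
  rw [sat_all]
  rintro t ⟨m, cfg, hw, hlopt, rfl⟩
  rw [sat_ex]
  set t₀ := traceOf (initCfg (inputW e)) n with ht₀
  have hrept₀ : Rep (initCfg (inputW e)) n t₀ := rep_traceOf _ _ hq0opt
  have hrept : Rep cfg m (traceOf cfg m) := rep_traceOf _ _ hlopt
  rcases hl : cfg.l with _ | q
  · -- halted configuration: witness is itself
    refine ⟨traceOf cfg m, ⟨m, cfg, hw, hlopt, rfl⟩, ?_⟩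
    rw [bodyF, sat_fand]
    constructor
    · apply InitF_sat
      have : (Function.update (Function.update (Function.update A 0 t₀) 1 (traceOf cfg m)) 2
          (traceOf cfg m)) 0 = t₀ := by simp [Function.update]
      rw [this]
      exact hrept₀
    · rw [sat_or, sat_atom]
      left
      have : (Function.update (Function.update (Function.update A 0 t₀) 1 (traceOf cfg m)) 2
          (traceOf cfg m)) 1 = traceOf cfg m := by simp [Function.update]
      rw [this]
      exact (hrept.hq none mem_optSL_none).2 hl.symm
  · -- running configuration: witness is the successor
    have hqS : q ∈ S := by
      rcases (by simpa [optSL] using hlopt) with h' | ⟨q', hq', he⟩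
      · rw [hl] at h'; exact nomatch h'
      · rw [hl] at he; cases he; exact mem_SL_iff.1 hq'
    rcases m with _ | m'
    · rw [HW, hl] at hw
      exact nomatch hw
    rcases hw with hw | ⟨c', hstepc, hwc⟩
    · rw [hl] at hw; exact nomatch hw
    have hceq : c' = stepAux (tr q) cfg.var cfg.stk := by
      obtain ⟨l, vv, stk⟩ := cfg
      simp only at hl
      subst hl
      change some (stepAux (tr q) vv stk) = some c' at hstepc
      exact Option.some.inj hstepc.symm
    have hc'opt : c'.l ∈ optSL := by
      rw [hceq]
      exact stepAux_supports _ _ _ (hS2 q hqS)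
    refine ⟨traceOf c' m', ⟨m', c', hwc, hc'opt, rfl⟩, ?_⟩
    set A' := Function.update (Function.update (Function.update A 0 t₀) 1 (traceOf cfg (m' + 1)))
      2 (traceOf c' m') with hA'
    have hA0 : A' 0 = t₀ := by simp [hA', Function.update]
    have hA1 : A' 1 = traceOf cfg (m' + 1) := by simp [hA', Function.update]
    have hA2 : A' 2 = traceOf c' m' := by simp [hA']
    rw [bodyF, sat_fand]
    constructor
    · apply InitF_sat
      rw [hA0]
      exact hrept₀
    · rw [sat_or]
      right
      rw [sat_fand, sat_atom, hA1]
      refine ⟨(hrept.hb 0).2 (by omega), ?_⟩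
      rw [STEPF, sat_bigOr]
      refine ⟨_, List.mem_map.2 ⟨q, mem_SL_iff.2 hqS, rfl⟩, ?_⟩
      rw [sat_bigOr]
      refine ⟨_, List.mem_map.2 ⟨cfg.var, mem_σlist _, rfl⟩, ?_⟩
      rw [sat_fand, sat_fand, sat_atom, sat_atom, hA1]
      refine ⟨(hrept.hq (some q) (mem_optSL_some hqS)).2 hl.symm, (hrept.hv cfg.var).2 rfl, ?_⟩
      have hb' : ∀ i, bA ∈ A' 1 i ↔ i < m' + 1 := by rw [hA1]; exact hrept.hb
      have hs' : ∀ k γ i, sA k γ ∈ A' 1 i ↔ (cfg.stk k)[i]? = some γ := by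
        rw [hA1]; exact hrept.hs
      rw [sat_comp hb' hs' (tr q) cfg.var (fun _ => []) (fun _ => 0) (hS2 q hqS), cur_nil, hA2,
        Nat.add_sub_cancel, ← hceq]
      exact rep_traceOf _ _ hc'opt

theorem satisfiable_iff (e : ℕ) :
    Satisfiable (ψform e) ↔ ((Denumerable.ofNat Nat.Partrec.Code e).eval e).Dom :=
  ⟨sound, complete⟩

end HSat


namespace HSat
open HLTL Turing Turing.TM2 Turing.PartrecToTM2 Turing.ToPartrec

/-! #### Syntactic sanity: quantifier-free bodies with variables among 0,1,2 -/

def Good (φ : HLTL) : Prop := quantFree φ = true ∧ ∀ x ∈ free φ, x < 3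

lemma Good.tt' : Good .tt := ⟨rfl, by intro x hx; simp [free] at hx⟩
lemma Good.atom' {a π} (h : π < 3) : Good (.atom a π) :=
  ⟨rfl, by intro x hx; simp [free] at hx; omega⟩
lemma Good.neg' {φ} (h : Good φ) : Good (.neg φ) := ⟨h.1, h.2⟩
lemma Good.or' {φ ψ} (h : Good φ) (h' : Good ψ) : Good (.or φ ψ) :=
  ⟨by simp only [quantFree, h.1, h'.1, Bool.and_self], by
    intro x hx
    rcases Finset.mem_union.1 hx with h0 | h0
    exacts [h.2 x h0, h'.2 x h0]⟩
lemma Good.next' {φ} (h : Good φ) : Good (.next φ) := ⟨h.1, h.2⟩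
lemma Good.until' {φ ψ} (h : Good φ) (h' : Good ψ) : Good (.until_ φ ψ) :=
  ⟨by simp only [quantFree, h.1, h'.1, Bool.and_self], by
    intro x hx
    rcases Finset.mem_union.1 hx with h0 | h0
    exacts [h.2 x h0, h'.2 x h0]⟩
lemma Good.fand' {φ ψ} (h : Good φ) (h' : Good ψ) : Good (fand φ ψ) :=
  (h.neg'.or' h'.neg').neg'
lemma Good.fX' {φ} (n : ℕ) (h : Good φ) : Good (fX n φ) := by
  induction n with
  | zero => exact h
  | succ n ih => exact ih.next'
lemma Good.fG' {φ} (h : Good φ) : Good (fG φ) := (Good.tt'.until' h.neg').neg'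
lemma Good.fF' {φ} (h : Good φ) : Good (fF φ) := Good.tt'.until' h
lemma Good.fiff' {φ ψ} (h : Good φ) (h' : Good ψ) : Good (fiff φ ψ) :=
  (h.neg'.or' h').fand' (h'.neg'.or' h)
lemma Good.bigAnd' {l : List HLTL} (h : ∀ φ ∈ l, Good φ) : Good (bigAnd l) := by
  induction l with
  | nil => exact Good.tt'
  | cons φ l ih =>
    exact (h φ (by simp)).fand' (ih fun ψ hψ => h ψ (by simp [hψ]))
lemma Good.bigOr' {l : List HLTL} (h : ∀ φ ∈ l, Good φ) : Good (bigOr l) := by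
  induction l with
  | nil => exact Good.tt'.neg'
  | cons φ l ih =>
    exact (h φ (by simp)).or' (ih fun ψ hψ => h ψ (by simp [hψ]))
lemma Good.lit' {b a π} (h : π < 3) : Good (lit b a π) := by
  cases b
  · exact (Good.atom' h).neg'
  · exact Good.atom' h

lemma good_exactS {π k γ} (h : π < 3) : Good (exactS π k γ) :=
  Good.bigAnd' (by rintro φ hφ; obtain ⟨γ', _, rfl⟩ := List.mem_map.1 hφ; exact Good.lit' h)
lemma good_noS {π k} (h : π < 3) : Good (noS π k) := by
  apply Good.bigAnd'
  rintro φ hφ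
  obtain ⟨γ', _, rfl⟩ := List.mem_map.1 hφ
  exact (Good.atom' h).neg'
lemma good_guard {k n s} : Good (guard k n s) := by
  rcases s with _ | γ
  · exact Good.fX' n (good_noS (by norm_num))
  · exact Good.fX' n (Good.atom' (by norm_num))
lemma good_stateAssert {π o} (h : π < 3) : Good (stateAssert π o) :=
  Good.bigAnd' (by rintro φ hφ; obtain ⟨o', _, rfl⟩ := List.mem_map.1 hφ; exact Good.lit' h)
lemma good_varAssert {π s} (h : π < 3) : Good (varAssert π s) :=
  Good.bigAnd' (by rintro φ hφ; obtain ⟨s', _, rfl⟩ := List.mem_map.1 hφ; exact Good.lit' h)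
lemma good_spellAt {π k} (h : π < 3) : ∀ w, Good (spellAt π k w)
  | [] => Good.tt'
  | γ :: w => (good_exactS h).fand' (good_spellAt h w).next'
lemma good_eqShift {k d e} : Good (eqShift k d e) :=
  Good.fG' (Good.bigAnd' (by
    rintro φ hφ; obtain ⟨γ, _, rfl⟩ := List.mem_map.1 hφ
    exact (Good.fX' d (Good.atom' (by norm_num))).fiff' (Good.fX' e (Good.atom' (by norm_num)))))
lemma good_bStep : Good bStep :=
  Good.fG' ((Good.atom' (by norm_num)).fiff' (Good.atom' (by norm_num)).next')
lemma good_FINAL {o v P C} : Good (FINAL o v P C) :=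
  (good_stateAssert (by norm_num)).fand' ((good_varAssert (by norm_num)).fand'
    (good_bStep.fand' (Good.bigAnd' (by
      rintro φ hφ; obtain ⟨k, _, rfl⟩ := List.mem_map.1 hφ
      exact (good_spellAt (by norm_num) _).fand' good_eqShift))))

lemma good_comp : ∀ (stmt : TM2.Stmt (fun _ : K' => Γ') Λ' (Option Γ'))
    (v : Option Γ') (P : K' → List Γ') (C : K' → ℕ), Good (comp stmt v P C) := by
  intro stmt
  induction stmt with
  | push k f q IH => intro v P C; exact IH _ _ _
  | peek k f q IH =>
    intro v P C
    rw [show comp (.peek k f q) v P C =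
        (match P k with
        | γ :: _ => comp q (f v (some γ)) P C
        | [] => bigOr (σlist.map fun s => fand (guard k (C k) s) (comp q (f v s) P C)))
        from rfl]
    cases P k with
    | cons γ rest => exact IH _ _ _
    | nil =>
      exact Good.bigOr' (by
        rintro φ hφ; obtain ⟨s, _, rfl⟩ := List.mem_map.1 hφ
        exact good_guard.fand' (IH _ _ _))
  | pop k f q IH =>
    intro v P C
    rw [show comp (.pop k f q) v P C =
        (match P k with
        | γ :: rest => comp q (f v (some γ)) (Function.update P k rest) C
        | [] => bigOr (σlist.map fun s =>
            fand (guard k (C k) s) (comp q (f v s) P (Function.update C k (C k + 1)))))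
        from rfl]
    cases P k with
    | cons γ rest => exact IH _ _ _
    | nil =>
      exact Good.bigOr' (by
        rintro φ hφ; obtain ⟨s, _, rfl⟩ := List.mem_map.1 hφ
        exact good_guard.fand' (IH _ _ _))
  | load g q IH => intro v P C; exact IH _ _ _
  | branch p q₁ q₂ IH₁ IH₂ =>
    intro v P C
    rw [show comp (.branch p q₁ q₂) v P C =
      (if p v then comp q₁ v P C else comp q₂ v P C) from rfl]
    split
    · exact IH₁ _ _ _
    · exact IH₂ _ _ _
  | goto f => intro v P C; exact good_FINAL
  | halt => intro v P C; exact good_FINAL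

lemma good_bWF : Good bWF :=
  (Good.fG' ((Good.atom' (by norm_num)).or' (Good.atom' (by norm_num)).next'.neg')).fand'
    (Good.fF' (Good.atom' (by norm_num)).neg')
lemma good_stkInit {w k} : Good (stkInit w k) := by
  rw [stkInit]
  split
  · exact (good_spellAt (by norm_num) _).fand' (Good.fX' _ (Good.fG' (good_noS (by norm_num))))
  · exact Good.fG' (good_noS (by norm_num))
lemma good_InitF {w} : Good (InitF w) :=
  (good_stateAssert (by norm_num)).fand' ((good_varAssert (by norm_num)).fand'
    (good_bWF.fand' (Good.bigAnd' (by
      rintro φ hφ; obtain ⟨k, _, rfl⟩ := List.mem_map.1 hφ; exact good_stkInit))))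
lemma good_STEPF : Good STEPF :=
  Good.bigOr' (by
    rintro φ hφ; obtain ⟨q, _, rfl⟩ := List.mem_map.1 hφ
    exact Good.bigOr' (by
      rintro φ hφ; obtain ⟨v, _, rfl⟩ := List.mem_map.1 hφ
      exact (Good.atom' (by norm_num)).fand'
        ((Good.atom' (by norm_num)).fand' (good_comp _ _ _ _))))
lemma good_bodyF {w} : Good (bodyF w) :=
  good_InitF.fand' ((Good.atom' (by norm_num)).or'
    ((Good.atom' (by norm_num)).fand' good_STEPF))

lemma sentence_ψform (e : ℕ) : Sentence (ψform e) := by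
  constructor
  · show prenex (ψform e) = true
    have h1 : prenex (ψform e) = quantFree (bodyF (inputW e)) := rfl
    rw [h1, good_bodyF.1]
  · have h2 : free (ψform e) =
        (((free (bodyF (inputW e))).erase 2).erase 1).erase 0 := rfl
    rw [h2]
    apply Finset.eq_empty_of_forall_notMem
    intro x hx
    simp only [Finset.mem_erase] at hx
    obtain ⟨h0, h1', h2'⟩ := hx
    have := good_bodyF.2 x h2'.2
    omega

/-! #### Injectivity of the Gödel encoding -/

lemma encode_injective : Function.Injective HLTL.encode := by
  intro φ
  induction φ with
  | tt => intro ψ h; cases ψ <;> simp only [encode] at h <;> first | rfl | omega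
  | atom a π =>
    intro ψ h
    cases ψ <;> simp only [encode] at h <;> try omega
    next a' π' =>
      have hp : Nat.pair a π = Nat.pair a' π' := by omega
      obtain ⟨rfl, rfl⟩ := Nat.pair_eq_pair.1 hp
      rfl
  | neg φ ih =>
    intro ψ h
    cases ψ <;> simp only [encode] at h <;> try omega
    next ψ' => rw [ih (show HLTL.encode φ = HLTL.encode ψ' by omega)]
  | or φ₁ φ₂ ih₁ ih₂ =>
    intro ψ h
    cases ψ <;> simp only [encode] at h <;> try omega
    next ψ₁ ψ₂ =>
      have hp : Nat.pair (encode φ₁) (encode φ₂) = Nat.pair (encode ψ₁) (encode ψ₂) := by omega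
      obtain ⟨h1, h2⟩ := Nat.pair_eq_pair.1 hp
      rw [ih₁ h1, ih₂ h2]
  | next φ ih =>
    intro ψ h
    cases ψ <;> simp only [encode] at h <;> try omega
    next ψ' => rw [ih (show HLTL.encode φ = HLTL.encode ψ' by omega)]
  | until_ φ₁ φ₂ ih₁ ih₂ =>
    intro ψ h
    cases ψ <;> simp only [encode] at h <;> try omega
    next ψ₁ ψ₂ =>
      have hp : Nat.pair (encode φ₁) (encode φ₂) = Nat.pair (encode ψ₁) (encode ψ₂) := by omega
      obtain ⟨h1, h2⟩ := Nat.pair_eq_pair.1 hp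
      rw [ih₁ h1, ih₂ h2]
  | ex π φ ih =>
    intro ψ h
    cases ψ <;> simp only [encode] at h <;> try omega
    next π' ψ' =>
      have hp : Nat.pair π (encode φ) = Nat.pair π' (encode ψ') := by omega
      obtain ⟨h1, h2⟩ := Nat.pair_eq_pair.1 hp
      rw [h1, ih h2]
  | all π φ ih =>
    intro ψ h
    cases ψ <;> simp only [encode] at h <;> try omega
    next π' ψ' =>
      have hp : Nat.pair π (encode φ) = Nat.pair π' (encode ψ') := by omega
      obtain ⟨h1, h2⟩ := Nat.pair_eq_pair.1 hp
      rw [h1, ih h2]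

end HSat


namespace HSat
open HLTL Turing Turing.TM2 Turing.PartrecToTM2 Turing.ToPartrec

/-! #### Computability of the reduction function -/

def eAnd (x y : ℕ) : ℕ := 8 * (8 * Nat.pair (8 * x + 2) (8 * y + 2) + 3) + 2
def eNext (x : ℕ) : ℕ := 8 * x + 4

lemma encode_fand (φ ψ : HLTL) :
    HLTL.encode (fand φ ψ) = eAnd (HLTL.encode φ) (HLTL.encode ψ) := rfl

lemma encode_fX (n : ℕ) (φ : HLTL) :
    HLTL.encode (fX n φ) = eNext^[n] (HLTL.encode φ) := by
  induction n with
  | zero => rfl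
  | succ n ih =>
    rw [Function.iterate_succ_apply']
    show 8 * HLTL.encode (fX n φ) + 4 = _
    rw [ih]
    rfl

noncomputable def cb1 : ℕ := HLTL.encode (exactS 0 K'.main Γ'.bit1)
noncomputable def cBase : ℕ := HLTL.encode (spellAt 0 K'.main [Γ'.cons])
noncomputable def cNo : ℕ := HLTL.encode (fG (noS 0 K'.main))
noncomputable def cSt : ℕ := HLTL.encode (stateAssert 0 (some q0))
noncomputable def cVar : ℕ := HLTL.encode (varAssert 0 none)
noncomputable def cBW : ℕ := HLTL.encode bWF
noncomputable def cRev : ℕ := HLTL.encode (fG (noS 0 K'.rev))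
noncomputable def cAux : ℕ := HLTL.encode (fG (noS 0 K'.aux))
noncomputable def cStk : ℕ := HLTL.encode (fG (noS 0 K'.stack))
noncomputable def cRest : ℕ :=
  HLTL.encode (.or (.atom (qA none) 1) (fand (.atom bA 1) STEPF))

lemma encode_spell_input (e : ℕ) :
    HLTL.encode (spellAt 0 K'.main (inputW e)) = (fun x => eAnd cb1 (eNext x))^[e] cBase := by
  induction e with
  | zero => rfl
  | succ e ih =>
    have h1 : inputW (e + 1) = Γ'.bit1 :: inputW e := by
      simp [inputW, List.replicate_succ]
    rw [h1, Function.iterate_succ_apply']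
    show eAnd cb1 (HLTL.encode (.next (spellAt 0 K'.main (inputW e)))) = _
    rw [show HLTL.encode (.next (spellAt 0 K'.main (inputW e)))
        = eNext (HLTL.encode (spellAt 0 K'.main (inputW e))) from rfl, ih]

lemma stkInit_main (w : List Γ') :
    stkInit w K'.main = fand (spellAt 0 K'.main w) (fX w.length (fG (noS 0 K'.main))) :=
  if_pos rfl

lemma stkInit_ne (w : List Γ') (k : K') (h : k ≠ K'.main) : stkInit w k = fG (noS 0 k) :=
  if_neg h

lemma encode_ψform (e : ℕ) : HLTL.encode (ψform e) =
    8 * Nat.pair 0 (8 * Nat.pair 1 (8 * Nat.pair 2 (eAnd (eAnd cSt (eAnd cVar (eAnd cBW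
      (eAnd (eAnd ((fun x => eAnd cb1 (eNext x))^[e] cBase) (eNext^[e + 1] cNo))
        (eAnd cRev (eAnd cAux (eAnd cStk 0))))))) cRest) + 6) + 7) + 6 := by
  have hmain : HLTL.encode (stkInit (inputW e) K'.main) =
      eAnd ((fun x => eAnd cb1 (eNext x))^[e] cBase) (eNext^[e + 1] cNo) := by
    rw [stkInit_main, encode_fand, encode_spell_input,
      show (inputW e).length = e + 1 by simp [inputW], encode_fX, cNo]
  have hbig : HLTL.encode (bigAnd (Klist.map (stkInit (inputW e)))) =
      eAnd (HLTL.encode (stkInit (inputW e) K'.main))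
        (eAnd (HLTL.encode (stkInit (inputW e) K'.rev))
          (eAnd (HLTL.encode (stkInit (inputW e) K'.aux))
            (eAnd (HLTL.encode (stkInit (inputW e) K'.stack)) 0))) := rfl
  have hrev : HLTL.encode (stkInit (inputW e) K'.rev) = cRev := by
    rw [stkInit_ne _ _ (by intro h; cases h)]; rfl
  have haux : HLTL.encode (stkInit (inputW e) K'.aux) = cAux := by
    rw [stkInit_ne _ _ (by intro h; cases h)]; rfl
  have hstk : HLTL.encode (stkInit (inputW e) K'.stack) = cStk := by
    rw [stkInit_ne _ _ (by intro h; cases h)]; rfl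
  have hinit : HLTL.encode (InitF (inputW e)) =
      eAnd cSt (eAnd cVar (eAnd cBW (HLTL.encode (bigAnd (Klist.map (stkInit (inputW e))))))) :=
    rfl
  have hbody : HLTL.encode (bodyF (inputW e)) =
      eAnd (HLTL.encode (InitF (inputW e))) cRest := rfl
  have hout : HLTL.encode (ψform e) =
      8 * Nat.pair 0 (8 * Nat.pair 1 (8 * Nat.pair 2 (HLTL.encode (bodyF (inputW e)))
        + 6) + 7) + 6 := rfl
  rw [hout, hbody, hinit, hbig, hrev, haux, hstk, hmain]

lemma primrec_code : Primrec fun e => HLTL.encode (ψform e) := by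
  have haff : ∀ c : ℕ, Primrec (fun x : ℕ => 8 * x + c) := fun c =>
    Primrec.nat_add.comp (Primrec.nat_mul.comp (.const 8) .id) (.const c)
  have heAnd : Primrec₂ eAnd := by
    have : Primrec fun p : ℕ × ℕ => 8 * (8 * Nat.pair (8 * p.1 + 2) (8 * p.2 + 2) + 3) + 2 :=
      (haff 2).comp ((haff 3).comp
        (Primrec₂.natPair.comp ((haff 2).comp .fst) ((haff 2).comp .snd)))
    exact this
  have hiter1 : Primrec fun e : ℕ => (fun x => eAnd cb1 (eNext x))^[e] cBase :=
    Primrec.nat_iterate .id (.const cBase)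
      (heAnd.comp (Primrec.const cb1) ((haff 4).comp .snd))
  have hiter2 : Primrec fun e : ℕ => eNext^[e + 1] cNo :=
    Primrec.nat_iterate Primrec.succ (.const cNo) ((haff 4).comp .snd)
  have hINN : Primrec fun e : ℕ => eAnd (eAnd cSt (eAnd cVar (eAnd cBW
      (eAnd (eAnd ((fun x => eAnd cb1 (eNext x))^[e] cBase) (eNext^[e + 1] cNo))
        (eAnd cRev (eAnd cAux (eAnd cStk 0))))))) cRest := by
    apply heAnd.comp _ (Primrec.const cRest)
    apply heAnd.comp (Primrec.const cSt)
    apply heAnd.comp (Primrec.const cVar)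
    apply heAnd.comp (Primrec.const cBW)
    apply heAnd.comp _ (Primrec.const (eAnd cRev (eAnd cAux (eAnd cStk 0))))
    exact heAnd.comp hiter1 hiter2
  have final : Primrec fun e : ℕ =>
      8 * Nat.pair 0 (8 * Nat.pair 1 (8 * Nat.pair 2 (eAnd (eAnd cSt (eAnd cVar (eAnd cBW
        (eAnd (eAnd ((fun x => eAnd cb1 (eNext x))^[e] cBase) (eNext^[e + 1] cNo))
          (eAnd cRev (eAnd cAux (eAnd cStk 0))))))) cRest) + 6) + 7) + 6 := by
    apply (haff 6).comp
    apply Primrec₂.natPair.comp (Primrec.const 0)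
    apply (haff 7).comp
    apply Primrec₂.natPair.comp (Primrec.const 1)
    apply (haff 6).comp
    apply Primrec₂.natPair.comp (Primrec.const 2)
    exact hINN
  exact final.of_eq fun e => (encode_ψform e).symm

end HSat

/-- HyperLTL-SAT is RE-hard: the halting problem (the set of codes `e` such
that the `e`-th partial computable function halts on input `e`) many-one
reduces to the set of Gödel codes of satisfiable HyperLTL formulas. -/
theorem hyperLTLSat_re_hard :
    (fun e : ℕ => ((Denumerable.ofNat Nat.Partrec.Code e).eval e).Dom) ≤₀
      HyperLTLSatCode := by
  refine ⟨fun e => HLTL.encode (HSat.ψform e), HSat.primrec_code.to_comp, fun e => ?_⟩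
  constructor
  · intro h
    exact ⟨HSat.ψform e, HSat.sentence_ψform e, rfl, HSat.complete h⟩
  · rintro ⟨ψ, _, henc, hsat⟩
    cases HSat.encode_injective henc
    exact HSat.sound hsat
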